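/- For every integer t ≥ 15, the integer n = 111·2^t + 111 satisfies s(n) = s(n^2) = 12, where s is the binary digit sum. -/

import Mathlib

/-- binary digit sum -/
def s (n : ℕ) : ℕ := (Nat.digits 2 n).sum

lemma s_split (a b t : ℕ) (ha : 0 < a) (hb : b < 2 ^ t) :
    s (b + 2 ^ t * a) = s b + s a := by
  have hl : (Nat.digits 2 b).length ≤ t := by
    rcases Nat.eq_zero_or_pos b with rfl | hb0
    · simp
    · rw [Nat.digits_len 2 b (by norm_num) hb0.ne']
      have := (Nat.log_lt_iff_lt_pow (by norm_num : 1 < 2) hb0.ne').mpr hb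
      omega
  have h := Nat.digits_append_zeroes_append_digits (b := 2) (k := t - (Nat.digits 2 b).length)
    (m := a) (n := b) (by norm_num) ha
  rw [Nat.add_sub_cancel' hl] at h
  unfold s
  rw [← h]
  simp

theorem stmt_6 (t : ℕ) (ht : 15 ≤ t) :
    s (111 * 2 ^ t + 111) = 12 ∧ s ((111 * 2 ^ t + 111) ^ 2) = 12 := by
  have h15 : (32768 : ℕ) ≤ 2 ^ t := by
    calc (32768 : ℕ) = 2 ^ 15 := by norm_num
    _ ≤ 2 ^ t := Nat.pow_le_pow_right (by norm_num) ht
  constructor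
  · rw [show 111 * 2 ^ t + 111 = 111 + 2 ^ t * 111 by ring]
    rw [s_split 111 111 t (by norm_num) (by omega)]
    norm_num [s]
  · rw [show (111 * 2 ^ t + 111) ^ 2 = 12321 + 2 ^ t * (24642 + 2 ^ t * 12321) by ring]
    rw [s_split _ 12321 t (by omega) (by omega)]
    rw [s_split 12321 24642 t (by norm_num) (by omega)]
    have h1 : s 12321 = 4 := by norm_num [s]
    have h2 : s 24642 = 4 := by norm_num [s]
    omega
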